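/- If H is a retract of a finitely presented group G (i.e. there is a group homomorphism ρ : G → H which is the identity on the subgroup H of G), then H is finitely presented. -/

import Mathlib

/-- A group is finitely presented if it is isomorphic to a quotient of a finitely
generated free group by the normal closure of a finite set of relations. -/
def FinPresented (G : Type) [Group G] : Prop :=
  ∃ (n : ℕ) (rels : Finset (FreeGroup (Fin n))),
    Nonempty (PresentedGroup (rels : Set (FreeGroup (Fin n))) ≃* G)

theorem retract_of_finitely_presented {G : Type} [Group G] (H : Subgroup G)
    (hG : FinPresented G) (ρ : G →* H) (hρ : ∀ h : H, ρ (h : G) = h) :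
    FinPresented H := by
  obtain ⟨n, rels, ⟨e⟩⟩ := hG
  -- the presentation map
  set π : FreeGroup (Fin n) →* G :=
    e.toMonoidHom.comp (QuotientGroup.mk' (Subgroup.normalClosure (rels : Set (FreeGroup (Fin n)))))
    with hπ
  have πsurj : Function.Surjective π :=
    e.surjective.comp (QuotientGroup.mk'_surjective _)
  have kerπ : π.ker = Subgroup.normalClosure (rels : Set (FreeGroup (Fin n))) := by
    ext x
    simp only [hπ, MonoidHom.mem_ker, MonoidHom.comp_apply, MulEquiv.coe_toMonoidHom,
      EmbeddingLike.map_eq_one_iff]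
    have h := (EmbeddingLike.map_eq_one_iff (f := e) (x := (QuotientGroup.mk' (Subgroup.normalClosure (rels : Set (FreeGroup (Fin n)))) x : PresentedGroup (rels : Set (FreeGroup (Fin n)))))).trans (QuotientGroup.eq_one_iff x)
    exact h
  -- σ : G → G, the idempotent retraction
  set σ : G →* G := H.subtype.comp ρ with hσ
  have hσσ : ∀ g : G, σ (σ g) = σ g := by
    intro g; simp [hσ, hρ (ρ g)]
  -- lift σ to the free group
  have huex : ∀ i : Fin n, ∃ u : FreeGroup (Fin n), π u = σ (π (FreeGroup.of i)) :=
    fun i => πsurj _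
  choose u hu using huex
  set τ : FreeGroup (Fin n) →* FreeGroup (Fin n) := FreeGroup.lift u with hτ
  have hπτ : ∀ w, π (τ w) = σ (π w) := by
    intro w
    have : π.comp τ = σ.comp π := by
      apply FreeGroup.ext_hom
      intro i
      simp [hτ, hu i]
    exact DFunLike.congr_fun this w
  -- the new relations
  set newrels : Finset (FreeGroup (Fin n)) :=
    rels ∪ Finset.image (fun i => (FreeGroup.of i)⁻¹ * u i) Finset.univ with hnew
  set M : Subgroup (FreeGroup (Fin n)) :=
    Subgroup.normalClosure (newrels : Set (FreeGroup (Fin n))) with hM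
  -- the map onto H
  set φ : FreeGroup (Fin n) →* H := ρ.comp π with hφ
  have φsurj : Function.Surjective φ := by
    intro h
    obtain ⟨w, hw⟩ := πsurj (h : G)
    exact ⟨w, by simp [hφ, hw, hρ h]⟩
  have hMker : M = φ.ker := by
    apply le_antisymm
    · apply Subgroup.normalClosure_le_normal
      intro x hx
      simp only [hnew, Finset.coe_union, Set.mem_union, Finset.coe_image, Set.mem_image,
        Finset.mem_coe] at hx
      rcases hx with hx | ⟨i, _, rfl⟩
      · have : x ∈ π.ker := by
          rw [kerπ]; exact Subgroup.subset_normalClosure hx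
        simp only [SetLike.mem_coe, MonoidHom.mem_ker, hφ, MonoidHom.comp_apply]
        rw [MonoidHom.mem_ker] at this
        simp [this]
      · simp only [SetLike.mem_coe, MonoidHom.mem_ker, hφ, MonoidHom.comp_apply, map_mul, map_inv]
        have := hu i
        have h2 : ρ (σ (π (FreeGroup.of i))) = ρ (π (FreeGroup.of i)) := by
          simp [hσ, hρ]
        rw [this, h2]
        simp
    · intro w hw
      -- q ∘ τ = q
      set q : FreeGroup (Fin n) →* FreeGroup (Fin n) ⧸ M := QuotientGroup.mk' M with hq
      have hqτ : q.comp τ = q := by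
        apply FreeGroup.ext_hom
        intro i
        simp only [MonoidHom.comp_apply, hτ, FreeGroup.lift_apply_of]
        have hmem : (FreeGroup.of i)⁻¹ * u i ∈ M := by
          apply Subgroup.subset_normalClosure
          simp [hnew]
        have : q ((FreeGroup.of i)⁻¹ * u i) = 1 := by
          rwa [hq, ← MonoidHom.mem_ker, QuotientGroup.ker_mk']
        rw [map_mul, map_inv] at this
        rw [← mul_left_cancel_iff (a := (q (FreeGroup.of i))⁻¹), this]
        simp
      have hτw : τ w ∈ M := by
        have h1 : π (τ w) = 1 := by
          rw [hπτ]
          have : φ w = 1 := hw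
          simp only [hσ, MonoidHom.comp_apply]
          rw [show ρ (π w) = φ w from rfl, this]
          simp
        have : τ w ∈ π.ker := h1
        rw [kerπ] at this
        refine Subgroup.normalClosure_mono ?_ this
        simp [hnew]
      have : q w = q (τ w) := (DFunLike.congr_fun hqτ w).symm
      have hq1 : q (τ w) = 1 := by
        rwa [hq, ← MonoidHom.mem_ker, QuotientGroup.ker_mk']
      have : w ∈ q.ker := by rw [MonoidHom.mem_ker, this, hq1]
      rwa [hq, QuotientGroup.ker_mk'] at this
  refine ⟨n, newrels, ⟨?_⟩⟩
  exact (QuotientGroup.quotientMulEquivOfEq hMker).trans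
    (QuotientGroup.quotientKerEquivOfSurjective φ φsurj)
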